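/- A set A ⊆ ℕ is dynamically thick if and only if for every piecewise syndetic set S ⊆ ℕ there exists a finite set F ⊆ A such that the set S − F is thick. -/

import Mathlib

/-- The set `A - n`, difference taken inside the positive integers:
`A - n = {m : m >= 1 and m + n ∈ A}`. -/
def NSub (A : Set ℕ) (n : ℕ) : Set ℕ := {m : ℕ | 0 < m ∧ m + n ∈ A}

/-- `S ⊆ ℕ` is thick if every finite subset of `ℕ` has a translate inside `S`. -/
def Thick (S : Set ℕ) : Prop :=
  ∀ F : Finset ℕ, ∃ n : ℕ, 0 < n ∧ ∀ f ∈ F, f + n ∈ S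

/-- `S ⊆ ℕ` is piecewise syndetic if `⋃_{i=1}^{N} (S - i)` is thick for some `N ≥ 1`. -/
def PiecewiseSyndetic (S : Set ℕ) : Prop :=
  ∃ N : ℕ, 0 < N ∧ Thick (⋃ i ∈ Finset.Icc 1 N, NSub S i)

/-- A topological dynamical system: a nonempty compact metric space together with a
continuous self-map. -/
structure MetricDynSystem where
  carrier : Type
  [metric : MetricSpace carrier]
  [cpt : CompactSpace carrier]
  [carrier_nonempty : Nonempty carrier]
  map : carrier → carrier
  continuous_map : Continuous map

attribute [instance] MetricDynSystem.metric MetricDynSystem.cpt MetricDynSystem.carrier_nonempty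

/-- A system is minimal if every point has dense forward orbit `{T^n x : n ∈ ℕ}`. -/
def MetricDynSystem.Minimal (S : MetricDynSystem) : Prop :=
  ∀ x : S.carrier, Dense {y : S.carrier | ∃ n : ℕ, 0 < n ∧ S.map^[n] x = y}

/-- `A` is dynamically thick: for every minimal system, every point `x` and every
nonempty open `U`, some `n ∈ A` has `T^n x ∈ U`. -/
def DynThick (A : Set ℕ) : Prop :=
  ∀ S : MetricDynSystem, S.Minimal →
    ∀ (x : S.carrier) (U : Set S.carrier), IsOpen U → U.Nonempty →
      ∃ n ∈ A, 0 < n ∧ S.map^[n] x ∈ U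


open Set Filter Topology

def shft : (ℕ → Bool) → (ℕ → Bool) := fun x n => x (n + 1)

lemma shft_continuous : Continuous shft :=
  continuous_pi fun n => continuous_apply (n + 1)

lemma shft_iter (t : ℕ) (x : ℕ → Bool) (n : ℕ) : (shft^[t] x) n = x (n + t) := by
  induction t generalizing x with
  | zero => rfl
  | succ t ih =>
    rw [Function.iterate_succ_apply, ih]
    show x (n + t + 1) = x (n + (t + 1))
    ring_nf

lemma coord_closed (j : ℕ) (b : Bool) : IsClosed {x : ℕ → Bool | x j = b} :=
  isClosed_eq (continuous_apply j) continuous_const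

lemma coord_open (j : ℕ) (b : Bool) : IsOpen {x : ℕ → Bool | x j = b} := by
  have h : {x : ℕ → Bool | x j = b} = (fun x : ℕ → Bool => x j) ⁻¹' {b} := rfl
  rw [h]
  exact (isOpen_discrete _).preimage (continuous_apply j)


lemma exists_minimal_subsystem {Y : Type*} [TopologicalSpace Y] {T : Y → Y} (hT : Continuous T)
    {M₀ : Set Y} (hcpt : IsCompact M₀) (hcl : IsClosed M₀) (hne : M₀.Nonempty)
    (hinv : Set.MapsTo T M₀ M₀) :
    ∃ M : Set Y, M ⊆ M₀ ∧ M.Nonempty ∧ IsClosed M ∧ Set.MapsTo T M M ∧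
      ∀ x ∈ M, closure {u | ∃ n, 0 < n ∧ T^[n] x = u} = M := by
  set 𝒞 : Set (Set Y) := {C | C.Nonempty ∧ IsClosed C ∧ C ⊆ M₀ ∧ Set.MapsTo T C C} with h𝒞
  have hzorn := zorn_superset_nonempty 𝒞 ?_ M₀ ⟨hne, hcl, subset_rfl, hinv⟩
  · obtain ⟨M, hM0, hMmin⟩ := hzorn
    obtain ⟨hMne, hMcl, hMsub, hMinv⟩ := hMmin.prop
    refine ⟨M, hMsub, hMne, hMcl, hMinv, ?_⟩
    intro x hx
    set O : Set Y := {u | ∃ n, 0 < n ∧ T^[n] x = u} with hO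
    have hOsubM : O ⊆ M := by
      rintro u ⟨n, hn, rfl⟩
      exact hMinv.iterate n hx
    have hCsubM : closure O ⊆ M := closure_minimal hOsubM hMcl
    have hOC : Set.MapsTo T O O := by
      rintro u ⟨n, hn, rfl⟩
      exact ⟨n + 1, Nat.succ_pos n, Function.iterate_succ_apply' T n x⟩
    have hC𝒞 : closure O ∈ 𝒞 := by
      refine ⟨⟨T x, subset_closure ⟨1, one_pos, by simp⟩⟩, isClosed_closure,
        hCsubM.trans hMsub, hOC.closure hT⟩
    exact le_antisymm hCsubM (hMmin.le_of_le hC𝒞 hCsubM)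
  · intro c hc hchain hcne
    refine ⟨⋂₀ c, ⟨?_, ?_, ?_, ?_⟩, fun s hs => sInter_subset_of_mem hs⟩
    · haveI : Nonempty c := hcne.to_subtype
      apply IsCompact.nonempty_sInter_of_directed_nonempty_isCompact_isClosed
      · intro s hs t ht
        rcases hchain.total hs ht with h | h
        · exact ⟨s, hs, subset_rfl, h⟩
        · exact ⟨t, ht, h, subset_rfl⟩
      · exact fun U hU => (hc hU).1
      · exact fun U hU => hcpt.of_isClosed_subset (hc hU).2.1 (hc hU).2.2.1
      · exact fun U hU => (hc hU).2.1
    · exact isClosed_sInter fun U hU => (hc hU).2.1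
    · obtain ⟨s, hs⟩ := hcne
      exact (sInter_subset_of_mem hs).trans (hc hs).2.2.1
    · intro y hy
      intro U hU
      exact (hc hU).2.2.2 (hy U hU)


theorem dynthick_forward (A : Set ℕ) (hA : DynThick A) (S : Set ℕ) (hS : PiecewiseSyndetic S) :
    ∃ F : Finset ℕ, (F : Set ℕ) ⊆ A ∧ Thick (⋃ f ∈ F, NSub S f) := by
  classical
  obtain ⟨N, hNpos, hT0⟩ := hS
  set w : ℕ → Bool := fun n => if n ∈ S then true else false with hw
  have hwS : ∀ n, w n = true ↔ n ∈ S := by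
    intro n; by_cases h : n ∈ S <;> simp [hw, h]
  set Orb : Set (ℕ → Bool) := {x | ∃ t : ℕ, shft^[t] w = x} with hOrb
  set K : Set (ℕ → Bool) := closure Orb with hK
  have hKcl : IsClosed K := isClosed_closure
  have hKinv : Set.MapsTo shft K K := by
    have h1 : Set.MapsTo shft Orb Orb := by
      rintro x ⟨t, rfl⟩
      exact ⟨t + 1, Function.iterate_succ_apply' shft t w⟩
    exact h1.closure shft_continuous
  set W : Set (ℕ → Bool) := {z | ∀ m : ℕ, ∃ i ∈ Finset.Icc 1 N, z (m + i) = true} with hWdef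
  have hWcl : IsClosed W := by
    have : W = ⋂ m : ℕ, ⋃ i ∈ (Finset.Icc 1 N : Finset ℕ), {z : ℕ → Bool | z (m + i) = true} := by
      ext z
      simp [hWdef]
    rw [this]
    refine isClosed_iInter fun m => ?_
    exact Set.Finite.isClosed_biUnion (Finset.Icc 1 N).finite_toSet
      fun i _ => coord_closed (m + i) true
  have hWinv : Set.MapsTo shft W W := by
    intro z hz m
    obtain ⟨i, hi, hzi⟩ := hz (m + 1)
    refine ⟨i, hi, ?_⟩
    show z (m + i + 1) = true
    have : m + i + 1 = m + 1 + i := by ring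
    rw [this]; exact hzi
  -- a point of K ∩ W
  choose nn hnn0 hnn1 using fun L => hT0 (Finset.range (L + 1))
  set y : ℕ → (ℕ → Bool) := fun L => shft^[nn L] w with hy
  have hyK : ∀ L, y L ∈ K := fun L => subset_closure ⟨nn L, rfl⟩
  obtain ⟨z, hzK, φ, hφ, hconv⟩ := (hKcl.isCompact).tendsto_subseq hyK
  have hzW : z ∈ W := by
    intro m
    have hev1 : ∀ᶠ k in Filter.atTop, ∀ i ∈ Finset.Icc 1 N, (y (φ k)) (m + i) = z (m + i) := by
      rw [Filter.eventually_all_finset]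
      intro i _
      have hti : Filter.Tendsto (fun k => (y (φ k)) (m + i)) Filter.atTop (𝓝 (z (m + i))) :=
        ((continuous_apply (m + i)).tendsto z).comp hconv
      have := hti.eventually_mem ((isOpen_discrete {z (m + i)}).mem_nhds rfl)
      simpa using this
    obtain ⟨k, hk1, hk2⟩ := (hev1.and (Filter.eventually_ge_atTop m)).exists
    have hmlt : m ∈ Finset.range (φ k + 1) :=
      Finset.mem_range.mpr (Nat.lt_succ_of_le (hk2.trans hφ.le_apply))
    have hT0m := hnn1 (φ k) m hmlt
    simp only [Set.mem_iUnion, NSub, Set.mem_setOf_eq] at hT0m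
    obtain ⟨i, hiIcc, hpos, hmem⟩ := hT0m
    refine ⟨i, hiIcc, ?_⟩
    have hyv : (y (φ k)) (m + i) = true := by
      show (shft^[nn (φ k)] w) (m + i) = true
      rw [shft_iter, hwS]
      have : m + i + nn (φ k) = m + nn (φ k) + i := by ring
      rw [this]; exact hmem
    rw [← hk1 i hiIcc]; exact hyv
  -- minimal subsystem inside K ∩ W
  have hKWcl : IsClosed (K ∩ W) := hKcl.inter hWcl
  have hKWinv : Set.MapsTo shft (K ∩ W) (K ∩ W) := fun x hx => ⟨hKinv hx.1, hWinv hx.2⟩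
  obtain ⟨M, hMsub, hMne, hMcl, hMinv, hMmin⟩ :=
    exists_minimal_subsystem shft_continuous hKWcl.isCompact hKWcl ⟨z, hzK, hzW⟩ hKWinv
  have hMcpt : IsCompact M := hMcl.isCompact
  letI : MetricSpace (ℕ → Bool) := PiNat.metricSpace
  haveI : CompactSpace ↥M := isCompact_iff_compactSpace.mp hMcpt
  haveI : Nonempty ↥M := hMne.to_subtype
  set Msys : MetricDynSystem :=
    { carrier := ↥M
      map := fun p => ⟨shft p.1, hMinv p.2⟩
      continuous_map := (shft_continuous.comp continuous_subtype_val).subtype_mk _ } with hMsys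
  have hmapit : ∀ (k : ℕ) (p : ↥M), ((Msys.map^[k] p : ↥M) : ℕ → Bool) = shft^[k] (p : ℕ → Bool) := by
    intro k
    induction k with
    | zero => intro p; rfl
    | succ k ih =>
      intro p
      rw [Function.iterate_succ_apply, ih, ← Function.iterate_succ_apply,
        Function.iterate_succ_apply']
  have hminimal : Msys.Minimal := by
    intro p
    intro q
    rw [closure_subtype]
    have himg : Subtype.val '' {y : ↥M | ∃ n, 0 < n ∧ Msys.map^[n] p = y} =
        {u | ∃ n, 0 < n ∧ shft^[n] (p : ℕ → Bool) = u} := by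
      ext u
      constructor
      · rintro ⟨q', ⟨n, hn, hq'⟩, rfl⟩
        exact ⟨n, hn, by rw [← hq', hmapit]⟩
      · rintro ⟨n, hn, rfl⟩
        refine ⟨Msys.map^[n] p, ⟨n, hn, rfl⟩, hmapit n p⟩
    rw [himg, hMmin (p : ℕ → Bool) p.2]
    exact q.2
  -- the open set: cylinder at coordinate 0
  set U : Set ↥M := {q : ↥M | (q : ℕ → Bool) 0 = true} with hU
  have hUopen : IsOpen U := (coord_open 0 true).preimage continuous_subtype_val
  have hUne : U.Nonempty := by
    obtain ⟨y₀, hy₀⟩ := hMne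
    obtain ⟨i, hi, hyi⟩ := (hMsub hy₀).2 0
    refine ⟨⟨shft^[i] y₀, hMinv.iterate i hy₀⟩, ?_⟩
    show (shft^[i] y₀) 0 = true
    rw [shft_iter]
    simpa using hyi
  -- apply dynamical thickness to every point; compactness gives a finite subcover
  have hcov : ∀ x : ℕ → Bool, x ∈ M → ∃ a : ℕ, (a ∈ A ∧ 0 < a) ∧ x a = true := by
    intro x hx
    obtain ⟨n, hnA, hnpos, hmem⟩ := hA Msys hminimal ⟨x, hx⟩ U hUopen hUne
    refine ⟨n, ⟨hnA, hnpos⟩, ?_⟩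
    have : ((Msys.map^[n] ⟨x, hx⟩ : ↥M) : ℕ → Bool) 0 = true := hmem
    rw [hmapit, shft_iter] at this
    simpa using this
  have hcover : M ⊆ ⋃ i : {a : ℕ // a ∈ A ∧ 0 < a}, {x : ℕ → Bool | x i.1 = true} := by
    intro x hx
    obtain ⟨a, ha, hxa⟩ := hcov x hx
    exact Set.mem_iUnion.mpr ⟨⟨a, ha⟩, hxa⟩
  obtain ⟨t, ht⟩ := hMcpt.elim_finite_subcover _
    (fun i : {a : ℕ // a ∈ A ∧ 0 < a} => coord_open i.1 true) hcover
  refine ⟨t.image Subtype.val, ?_, ?_⟩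
  · intro a ha
    simp only [Finset.coe_image, Set.mem_image, Finset.mem_coe] at ha
    obtain ⟨i, _, rfl⟩ := ha
    exact i.2.1
  · intro G
    obtain ⟨z₀, hz₀⟩ := hMne
    have hz₀K : z₀ ∈ K := (hMsub hz₀).1
    have hcF : ∀ g : ℕ, ∃ f, f ∈ t.image Subtype.val ∧ z₀ (f + (g + 1)) = true := by
      intro g
      have hg : shft^[g + 1] z₀ ∈ M := hMinv.iterate (g + 1) hz₀
      have := ht hg
      simp only [Set.mem_iUnion, Set.mem_setOf_eq] at this
      obtain ⟨i, hit, hival⟩ := this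
      refine ⟨i.1, Finset.mem_image_of_mem _ hit, ?_⟩
      rw [shft_iter] at hival
      exact hival
    choose f0 hf0F hf0v using hcF
    set J : Finset ℕ := G.image (fun g => f0 g + (g + 1)) with hJ
    set O' : Set (ℕ → Bool) := ⋂ j ∈ J, {x : ℕ → Bool | x j = z₀ j} with hO'
    have hO'open : IsOpen O' := isOpen_biInter_finset fun j _ => coord_open j (z₀ j)
    have hz₀O' : z₀ ∈ O' := Set.mem_iInter₂.mpr fun j _ => rfl
    obtain ⟨x, hxO', hxOrb⟩ := mem_closure_iff.1 hz₀K O' hO'open hz₀O'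
    obtain ⟨ts, rfl⟩ := hxOrb
    refine ⟨ts + 1, Nat.succ_pos _, ?_⟩
    intro g hg
    have hj : f0 g + (g + 1) ∈ J := Finset.mem_image_of_mem _ hg
    have hval : (shft^[ts] w) (f0 g + (g + 1)) = z₀ (f0 g + (g + 1)) :=
      Set.mem_iInter₂.mp hxO' _ hj
    rw [shft_iter] at hval
    have hwv : w (f0 g + (g + 1) + ts) = true := hval.trans (hf0v g)
    rw [hwS] at hwv
    refine Set.mem_iUnion₂.mpr ⟨f0 g, hf0F g, ?_, ?_⟩
    · omega
    · have : g + (ts + 1) + f0 g = f0 g + (g + 1) + ts := by ring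
      rw [this]; exact hwv


lemma exists_step (q : ℕ) (hq : 0 < q) (m : ℕ) : ∃ i, 1 ≤ i ∧ i ≤ q ∧ q ∣ (m + i) := by
  induction m with
  | zero => exact ⟨q, hq, le_refl q, by simpa using dvd_refl q⟩
  | succ m ih =>
    obtain ⟨i, h1, h2, hdvd⟩ := ih
    rcases eq_or_lt_of_le h1 with h | h
    · refine ⟨q, hq, le_refl q, ?_⟩
      have h3 : m + 1 + q = (m + i) + q := by omega
      rw [h3]
      exact dvd_add hdvd (dvd_refl q)
    · refine ⟨i - 1, by omega, by omega, ?_⟩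
      have h3 : m + 1 + (i - 1) = m + i := by omega
      rw [h3]
      exact hdvd

theorem dynthick_reverse (A : Set ℕ)
    (hcomb : ∀ S : Set ℕ, PiecewiseSyndetic S →
      ∃ F : Finset ℕ, (F : Set ℕ) ⊆ A ∧ Thick (⋃ f ∈ F, NSub S f)) :
    DynThick A := by
  intro Sys hMin x₀ U hUopen hUne
  by_cases hb : ∃ u ∈ U, u ≠ x₀
  · -- main case : U contains a point other than x₀
    obtain ⟨u, huU, hune⟩ := hb
    obtain ⟨ε, hε, hball⟩ := Metric.isOpen_iff.1 hUopen u huU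
    set r : ℝ := min (ε / 2) (dist u x₀ / 2) with hr
    have hdpos : 0 < dist u x₀ := dist_pos.mpr (Ne.symm (fun h => hune h.symm))
    have hrpos : 0 < r := lt_min (by linarith) (by linarith)
    set C : Set Sys.carrier := Metric.closedBall u r with hC
    have hCU : C ⊆ U := by
      intro y hy
      apply hball
      have h1 : dist y u ≤ r := Metric.mem_closedBall.mp hy
      have h2 : r ≤ ε / 2 := min_le_left _ _
      exact Metric.mem_ball.mpr (by linarith)
    have hx₀C : x₀ ∉ C := by
      intro h
      have h1 : dist x₀ u ≤ r := Metric.mem_closedBall.mp h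
      have h2 : r ≤ dist u x₀ / 2 := min_le_right _ _
      rw [dist_comm] at h1
      linarith
    set V : Set Sys.carrier := Metric.ball u r with hV
    have hVC : V ⊆ C := Metric.ball_subset_closedBall
    have hVopen : IsOpen V := Metric.isOpen_ball
    have hVne : V.Nonempty := ⟨u, Metric.mem_ball_self hrpos⟩
    have hCcl : IsClosed C := Metric.isClosed_closedBall
    -- a uniform bound for return times into V
    have hcover : (Set.univ : Set Sys.carrier) ⊆
        ⋃ i : {n : ℕ // 0 < n}, Sys.map^[i.1] ⁻¹' V := by
      intro y _
      obtain ⟨pt, ⟨n, hn, rfl⟩, hpV⟩ := (hMin y).exists_mem_open hVopen hVne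
      exact Set.mem_iUnion.mpr ⟨⟨n, hn⟩, hpV⟩
    obtain ⟨tf, htf⟩ := isCompact_univ.elim_finite_subcover _
      (fun i : {n : ℕ // 0 < n} => hVopen.preimage (Sys.continuous_map.iterate i.1)) hcover
    set Nb := tf.sup (fun i => i.1) with hNb
    have hbnd : ∀ y : Sys.carrier, ∃ i : ℕ, 1 ≤ i ∧ i ≤ Nb ∧ Sys.map^[i] y ∈ V := by
      intro y
      have h1 := htf (Set.mem_univ y)
      simp only [Set.mem_iUnion] at h1
      obtain ⟨i, hit, hiy⟩ := h1
      exact ⟨i.1, i.2, Finset.le_sup (f := fun i : {n : ℕ // 0 < n} => i.1) hit, hiy⟩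
    set S₀ : Set ℕ := {n | 0 < n ∧ Sys.map^[n] x₀ ∈ V} with hS₀
    have hS₀pws : PiecewiseSyndetic S₀ := by
      have hNb1 : 0 < Nb := by
        obtain ⟨i, hi1, hi2, _⟩ := hbnd x₀
        omega
      refine ⟨Nb, hNb1, fun G => ⟨1, one_pos, fun g _ => ?_⟩⟩
      obtain ⟨i, hi1, hi2, hiv⟩ := hbnd (Sys.map^[g + 1] x₀)
      rw [← Function.iterate_add_apply] at hiv
      refine Set.mem_iUnion₂.mpr ⟨i, Finset.mem_Icc.mpr ⟨hi1, hi2⟩, by omega, by omega, ?_⟩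
      have h2 : g + 1 + i = i + (g + 1) := by ring
      rw [h2]
      exact hiv
    obtain ⟨F, hFA, hD⟩ := hcomb S₀ hS₀pws
    choose nK hnK0 hnK1 using fun K => hD (Finset.range (K + 1))
    obtain ⟨z, -, φ, hφ, hconv⟩ := isCompact_univ.tendsto_subseq
      (x := fun K => Sys.map^[nK K] x₀) (fun K => Set.mem_univ _)
    have claim1 : ∀ j : ℕ, ∃ f ∈ F, Sys.map^[f + j] z ∈ C := by
      intro j
      have hQ : ∀ k, j ≤ k → ∃ f ∈ F, Sys.map^[f + j] (Sys.map^[nK (φ k)] x₀) ∈ V := by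
        intro k hk
        have hjm := hnK1 (φ k) j (Finset.mem_range.mpr (Nat.lt_succ_of_le (hk.trans hφ.le_apply)))
        simp only [Set.mem_iUnion, NSub, Set.mem_setOf_eq, hS₀] at hjm
        obtain ⟨f, hfF, -, -, hmem⟩ := hjm
        refine ⟨f, hfF, ?_⟩
        have hE : j + nK (φ k) + f = (f + j) + nK (φ k) := by ring
        rw [hE, Function.iterate_add_apply] at hmem
        exact hmem
      have hpig : ∃ f ∈ F, {k : ℕ | Sys.map^[f + j] (Sys.map^[nK (φ k)] x₀) ∈ V}.Infinite := by
        by_contra hcon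
        push_neg at hcon
        have hfin : (⋃ f ∈ F, {k : ℕ | Sys.map^[f + j] (Sys.map^[nK (φ k)] x₀) ∈ V}).Finite :=
          Set.Finite.biUnion F.finite_toSet fun f hf => (hcon f hf)
      -- Set.Ici j is infinite and contained in the union
        have hsub : Set.Ici j ⊆ ⋃ f ∈ F, {k : ℕ | Sys.map^[f + j] (Sys.map^[nK (φ k)] x₀) ∈ V} := by
          intro k hk
          obtain ⟨f, hf, hfv⟩ := hQ k hk
          exact Set.mem_iUnion₂.mpr ⟨f, hf, hfv⟩
        exact (Set.Ici_infinite j) (hfin.subset hsub)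
      obtain ⟨f, hfF, hinf⟩ := hpig
      refine ⟨f, hfF, ?_⟩
      have hfreq : ∃ᶠ k in Filter.atTop,
          Sys.map^[f + j] (Sys.map^[nK (φ k)] x₀) ∈ C := by
        apply Filter.Frequently.mono (Nat.frequently_atTop_iff_infinite.mpr hinf)
        exact fun k hk => hVC hk
      have htd : Filter.Tendsto (fun k => Sys.map^[f + j] (Sys.map^[nK (φ k)] x₀))
          Filter.atTop (𝓝 (Sys.map^[f + j] z)) :=
        ((Sys.continuous_map.iterate (f + j)).tendsto z).comp hconv
      exact hCcl.mem_of_frequently_of_tendsto hfreq htd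
    -- approach x₀ along the orbit of z
    have hz' : ∀ k : ℕ, ∃ j, 0 < j ∧ dist (Sys.map^[j] z) x₀ < 1 / (k + 1) := by
      intro k
      have hpos : (0 : ℝ) < 1 / (k + 1) := by positivity
      obtain ⟨pt, ⟨n, hn, rfl⟩, hp⟩ := (hMin z).exists_mem_open Metric.isOpen_ball
        ⟨x₀, Metric.mem_ball_self hpos⟩
      exact ⟨n, hn, Metric.mem_ball.mp hp⟩
    choose jj hjj0 hjj1 using hz'
    have claim1' : ∀ k : ℕ, ∃ f ∈ F, Sys.map^[f] (Sys.map^[jj k] z) ∈ C := by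
      intro k
      obtain ⟨f, hfF, hf⟩ := claim1 (jj k)
      rw [Function.iterate_add_apply] at hf
      exact ⟨f, hfF, hf⟩
    have hpig2 : ∃ f ∈ F, {k : ℕ | Sys.map^[f] (Sys.map^[jj k] z) ∈ C}.Infinite := by
      by_contra hcon
      push_neg at hcon
      have hfin : (⋃ f ∈ F, {k : ℕ | Sys.map^[f] (Sys.map^[jj k] z) ∈ C}).Finite :=
        Set.Finite.biUnion F.finite_toSet fun f hf => (hcon f hf)
      have hsub : (Set.univ : Set ℕ) ⊆ ⋃ f ∈ F, {k : ℕ | Sys.map^[f] (Sys.map^[jj k] z) ∈ C} := by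
        intro k _
        obtain ⟨f, hf, hfv⟩ := claim1' k
        exact Set.mem_iUnion₂.mpr ⟨f, hf, hfv⟩
      exact Set.infinite_univ (hfin.subset hsub)
    obtain ⟨f, hfF, hinf⟩ := hpig2
    have htd0 : Filter.Tendsto (fun k => Sys.map^[jj k] z) Filter.atTop (𝓝 x₀) := by
      rw [Metric.tendsto_atTop]
      intro δ hδ
      obtain ⟨Nk, hNk⟩ := exists_nat_one_div_lt hδ
      refine ⟨Nk, fun k hk => ?_⟩
      have h1 : (1 : ℝ) / (k + 1) ≤ 1 / (Nk + 1) := by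
        apply one_div_le_one_div_of_le
        · positivity
        · exact_mod_cast Nat.succ_le_succ hk
      have h2 := hjj1 k
      linarith
    have htd : Filter.Tendsto (fun k => Sys.map^[f] (Sys.map^[jj k] z))
        Filter.atTop (𝓝 (Sys.map^[f] x₀)) :=
      ((Sys.continuous_map.iterate f).tendsto x₀).comp htd0
    have hfml : Sys.map^[f] x₀ ∈ C :=
      hCcl.mem_of_frequently_of_tendsto (Nat.frequently_atTop_iff_infinite.mpr hinf) htd
    have hfpos : 0 < f := by
      rcases Nat.eq_zero_or_pos f with h | h
      · subst h
        exact absurd hfml hx₀C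
      · exact h
    exact ⟨f, hFA (Finset.mem_coe.mpr hfF), hfpos, hCU hfml⟩
  · -- degenerate case : U = {x₀}
    push_neg at hb
    obtain ⟨u₀, hu₀⟩ := hUne
    have hx₀U : x₀ ∈ U := hb u₀ hu₀ ▸ hu₀
    have hUx₀ : U = {x₀} := Set.eq_singleton_iff_unique_mem.mpr ⟨hx₀U, hb⟩
    have hopen : IsOpen ({x₀} : Set Sys.carrier) := hUx₀ ▸ hUopen
    obtain ⟨pt, ⟨p, hp, rfl⟩, hpmem⟩ := (hMin x₀).exists_mem_open hopen ⟨x₀, rfl⟩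
    have hper : Sys.map^[p] x₀ = x₀ := hpmem
    have hmul : ∀ c : ℕ, Sys.map^[p * c] x₀ = x₀ := by
      intro c
      induction c with
      | zero => rfl
      | succ c ih =>
        rw [Nat.mul_succ, Function.iterate_add_apply, hper, ih]
    set q := 2 * p with hq
    have hqpos : 0 < q := by omega
    set S₀ : Set ℕ := {n | 0 < n ∧ q ∣ n} with hS₀
    have hS₀pws : PiecewiseSyndetic S₀ := by
      refine ⟨q, hqpos, fun G => ⟨1, one_pos, fun g _ => ?_⟩⟩
      obtain ⟨i, hi1, hi2, hdvd⟩ := exists_step q hqpos (g + 1)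
      exact Set.mem_iUnion₂.mpr ⟨i, Finset.mem_Icc.mpr ⟨hi1, hi2⟩, by omega, by omega, hdvd⟩
    obtain ⟨F, hFA, hD⟩ := hcomb S₀ hS₀pws
    obtain ⟨n, hn0, hn1⟩ := hD (Finset.range q)
    obtain ⟨i, hi1, hi2, hdvd⟩ := exists_step q hqpos (n + p)
    -- choose g < q with q ∣ (g + n) + p
    obtain ⟨g, hgq, hgdvd⟩ : ∃ g, g < q ∧ q ∣ (g + n) + p := by
      rcases Nat.lt_or_ge i q with hiq | hiq
      · refine ⟨i, hiq, ?_⟩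
        have hE : (i + n) + p = n + p + i := by ring
        rw [hE]
        exact hdvd
      · have hie : i = q := le_antisymm hi2 hiq
        refine ⟨0, hqpos, ?_⟩
        have h3 := Nat.dvd_sub hdvd (dvd_refl q)
        have hE : n + p + i - q = (0 + n) + p := by omega
        rwa [hE] at h3
    have hgmem := hn1 g (Finset.mem_range.mpr hgq)
    simp only [Set.mem_iUnion, NSub, Set.mem_setOf_eq, hS₀] at hgmem
    obtain ⟨f, hfF, -, -, hfd⟩ := hgmem
    -- from q ∣ (g+n)+p and q ∣ (g+n)+f we get f ≡ p (mod q), hence f = p(2e+1)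
    have hple : p ≤ f := by
      by_contra hcon
      push_neg at hcon
      have h1 : q ∣ ((g + n) + p) - ((g + n) + f) := Nat.dvd_sub hgdvd hfd
      have h2 : ((g + n) + p) - ((g + n) + f) = p - f := by omega
      rw [h2] at h1
      have h3 : 0 < p - f := by omega
      have h4 := Nat.le_of_dvd h3 h1
      omega
    have h5 : q ∣ f - p := by
      have h1 : q ∣ ((g + n) + f) - ((g + n) + p) := Nat.dvd_sub hfd hgdvd
      have h2 : ((g + n) + f) - ((g + n) + p) = f - p := by omega
      rwa [h2] at h1
    obtain ⟨e, he⟩ := h5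
    have h6 : f = p + q * e := by
      generalize hE : q * e = E at he ⊢
      omega
    have hf_eq : f = p * (2 * e + 1) := by rw [h6, hq]; ring
    have hfpos : 0 < f := by
      rw [hf_eq]
      exact Nat.mul_pos hp (by omega)
    refine ⟨f, hFA (Finset.mem_coe.mpr hfF), hfpos, ?_⟩
    have hfix : Sys.map^[f] x₀ = x₀ := by
      rw [hf_eq]
      exact hmul (2 * e + 1)
    rw [hfix]
    exact hx₀U

theorem dynThick_iff_piecewiseSyndetic_characterization (A : Set ℕ) :
    DynThick A ↔
      ∀ S : Set ℕ, PiecewiseSyndetic S →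
        ∃ F : Finset ℕ, (F : Set ℕ) ⊆ A ∧ Thick (⋃ f ∈ F, NSub S f) := by
  constructor
  · intro hA S hS
    exact dynthick_forward A hA S hS
  · intro h
    exact dynthick_reverse A h
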